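/- If the instance admits a schedule in which every machine has load at most T̄ = (1+ε)T, then MILP(T̄) has an integral feasible solution, i.e., there exist z_{C,t} ∈ ℕ and x_{j,t} ∈ {0,1} satisfying constraints (1)–(4) with R = T̄. -/

import Mathlib

open Finset
open scoped Classical ENNReal

noncomputable section

variable {J : Type*} [Fintype J] {K : ℕ}

/-- The set `B_t` of finite big processing-time values occurring for machine type `t`. -/
def bigSet (ε T : ℝ) (p : Fin K → J → ℝ≥0∞) (t : Fin K) : Finset ℝ≥0∞ :=
  (Finset.univ.image (p t)).filter fun v => ENNReal.ofReal (ε ^ 2 * T) < v ∧ v ≠ ⊤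

/-- The set `S_t` of small processing-time values occurring for machine type `t`. -/
def smallSet (ε T : ℝ) (p : Fin K → J → ℝ≥0∞) (t : Fin K) : Finset ℝ≥0∞ :=
  (Finset.univ.image (p t)).filter fun v => v ≤ ENNReal.ofReal (ε ^ 2 * T)

/-- The size of a configuration `C` for the set of big values `B`. -/
def confSize (B : Finset ℝ≥0∞) (C : ℝ≥0∞ → ℕ) : ℝ≥0∞ := ∑ v ∈ B, (C v : ℝ≥0∞) * v

/-- `C` is a configuration for the set of big values `B`: it is supported on `B` and has
size at most `T̄ = (1+ε)T`. -/
def IsConf (ε T : ℝ) (B : Finset ℝ≥0∞) (C : ℝ≥0∞ → ℕ) : Prop :=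
  (∀ v ∉ B, C v = 0) ∧ confSize B C ≤ ENNReal.ofReal ((1 + ε) * T)

/-- Feasibility of the (relaxed) MILP(R): `z` are the configuration variables (supported
on the configurations for each type), `x` the fractional job-assignment variables
(vanishing when the processing time exceeds `T̄ = (1+ε)T`), subject to the constraints
(1)-(4) of the paper. -/
def MILPFeasible (ε T : ℝ) (p : Fin K → J → ℝ≥0∞) (m : Fin K → ℕ) (R : ℝ)
    (z : (ℝ≥0∞ → ℕ) → Fin K → ℝ≥0∞) (x : J → Fin K → ℝ≥0∞) : Prop :=
  (∀ C t, ¬ IsConf ε T (bigSet ε T p t) C → z C t = 0) ∧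
  (∀ j t, ENNReal.ofReal ((1 + ε) * T) < p t j → x j t = 0) ∧
  (∀ t, ∑' C : ℝ≥0∞ → ℕ, z C t = m t) ∧
  (∀ j, ∑ t, x j t = 1) ∧
  (∀ t, ∀ v ∈ bigSet ε T p t,
    ∑ j ∈ Finset.univ.filter (fun j => p t j = v), x j t ≤
      ∑' C : ℝ≥0∞ → ℕ, (C v : ℝ≥0∞) * z C t) ∧
  (∀ t, (∑' C : ℝ≥0∞ → ℕ, confSize (bigSet ε T p t) C * z C t) +
      ∑ v ∈ smallSet ε T p t, v * ∑ j ∈ Finset.univ.filter (fun j => p t j = v), x j t ≤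
      (m t : ℝ≥0∞) * ENNReal.ofReal R)

/-- The machines: `m t` machines of each type `t`. -/
def Machine (m : Fin K → ℕ) : Type := Σ t : Fin K, Fin (m t)

/-- The load of machine `i` under schedule `σ`. -/
def load (p : Fin K → J → ℝ≥0∞) (m : Fin K → ℕ) (σ : J → Machine m) (i : Machine m) :
    ℝ≥0∞ :=
  ∑ j ∈ Finset.univ.filter (fun j => σ j = i), p i.1 j


/-- The jobs assigned to machine `(t,i)` having processing time `v`. -/
def fib (p : Fin K → J → ℝ≥0∞) (m : Fin K → ℕ) (σ : J → Machine m)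
    (t : Fin K) (i : Fin (m t)) (v : ℝ≥0∞) : Finset J :=
  Finset.univ.filter (fun j => σ j = ⟨t, i⟩ ∧ p t j = v)

/-- The configuration of machine `(t,i)` under schedule `σ`. -/
def conf (ε T : ℝ) (p : Fin K → J → ℝ≥0∞) (m : Fin K → ℕ) (σ : J → Machine m)
    (t : Fin K) (i : Fin (m t)) : ℝ≥0∞ → ℕ :=
  fun v => if v ∈ bigSet ε T p t then (fib p m σ t i v).card else 0

/-- The integral configuration variables induced by `σ`. -/
def zdef (ε T : ℝ) (p : Fin K → J → ℝ≥0∞) (m : Fin K → ℕ) (σ : J → Machine m)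
    (C : ℝ≥0∞ → ℕ) (t : Fin K) : ℝ≥0∞ :=
  ∑ i : Fin (m t), if C = conf ε T p m σ t i then 1 else 0

private lemma fiber_le {α β : Type*} [DecidableEq β] (A : Finset α) (V : Finset β)
    (g : α → β) (f : α → ℝ≥0∞) :
    ∑ v ∈ V, ∑ j ∈ A.filter (fun j => g j = v), f j ≤ ∑ j ∈ A, f j := by
  calc ∑ v ∈ V, ∑ j ∈ A.filter (fun j => g j = v), f j
      = ∑ v ∈ V, ∑ j ∈ A, if g j = v then f j else 0 := by
        simp [Finset.sum_filter]
    _ = ∑ j ∈ A, ∑ v ∈ V, if g j = v then f j else 0 := Finset.sum_comm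
    _ ≤ ∑ j ∈ A, f j := by
        refine Finset.sum_le_sum fun j _ => ?_
        rw [Finset.sum_ite_eq V (g j) (fun _ => f j)]
        split <;> simp

private lemma sum_fib_le_load (p : Fin K → J → ℝ≥0∞) (m : Fin K → ℕ)
    (σ : J → Machine m) (t : Fin K) (i : Fin (m t)) (V : Finset ℝ≥0∞) :
    ∑ v ∈ V, ((fib p m σ t i v).card : ℝ≥0∞) * v ≤ load p m σ ⟨t, i⟩ := by
  have hfib : ∀ v : ℝ≥0∞, fib p m σ t i v =
      (Finset.univ.filter (fun j => σ j = (⟨t, i⟩ : Machine m))).filter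
        (fun j => p t j = v) := by
    intro v; simp [fib, Finset.filter_filter]
  have hsum : ∀ v : ℝ≥0∞, ∑ j ∈ fib p m σ t i v, p t j
      = ((fib p m σ t i v).card : ℝ≥0∞) * v := by
    intro v
    calc ∑ j ∈ fib p m σ t i v, p t j = ∑ _j ∈ fib p m σ t i v, v :=
          Finset.sum_congr rfl fun j hj => (Finset.mem_filter.mp hj).2.2
      _ = _ := by rw [Finset.sum_const, nsmul_eq_mul]
  calc ∑ v ∈ V, ((fib p m σ t i v).card : ℝ≥0∞) * v
      = ∑ v ∈ V, ∑ j ∈ (Finset.univ.filter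
          (fun j => σ j = (⟨t, i⟩ : Machine m))).filter (fun j => p t j = v), p t j := by
        refine Finset.sum_congr rfl fun v _ => ?_
        rw [← hfib v]
        exact (hsum v).symm
    _ ≤ ∑ j ∈ Finset.univ.filter (fun j => σ j = (⟨t, i⟩ : Machine m)), p t j :=
        fiber_le _ _ _ _
    _ = load p m σ ⟨t, i⟩ := rfl

private lemma tsum_z (ε T : ℝ) (p : Fin K → J → ℝ≥0∞) (m : Fin K → ℕ)
    (σ : J → Machine m) (t : Fin K) (g : (ℝ≥0∞ → ℕ) → ℝ≥0∞) :
    ∑' C : ℝ≥0∞ → ℕ, g C * zdef ε T p m σ C t = ∑ i : Fin (m t), g (conf ε T p m σ t i) := by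
  have h : ∀ C : ℝ≥0∞ → ℕ, g C * zdef ε T p m σ C t =
      ∑ i : Fin (m t), if C = conf ε T p m σ t i then g (conf ε T p m σ t i) else 0 := by
    intro C
    simp only [zdef, Finset.mul_sum, mul_ite, mul_one, mul_zero]
    refine Finset.sum_congr rfl fun i _ => ?_
    split <;> simp_all
  simp_rw [h]
  rw [Summable.tsum_finsetSum (fun i _ => ENNReal.summable)]
  refine Finset.sum_congr rfl fun i _ => ?_
  rw [tsum_eq_single (conf ε T p m σ t i) (fun C hC => if_neg hC), if_pos rfl]

private lemma x_sum_le_fib (p : Fin K → J → ℝ≥0∞) (m : Fin K → ℕ)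
    (σ : J → Machine m) (t : Fin K) (v : ℝ≥0∞) :
    ∑ j ∈ Finset.univ.filter (fun j => p t j = v),
        (if (σ j).1 = t then (1 : ℝ≥0∞) else 0)
      ≤ ∑ i : Fin (m t), ((fib p m σ t i v).card : ℝ≥0∞) := by
  have hR : ∀ i : Fin (m t), ((fib p m σ t i v).card : ℝ≥0∞)
      = ∑ j : J, if σ j = ⟨t, i⟩ ∧ p t j = v then 1 else 0 := fun i => by
    rw [Finset.sum_boole]; rfl
  simp_rw [hR]
  rw [Finset.sum_comm, Finset.sum_filter]
  refine Finset.sum_le_sum fun j _ => ?_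
  by_cases h1 : p t j = v
  · by_cases h2 : (σ j).1 = t
    · subst h2
      rw [if_pos h1, if_pos rfl]
      calc (1 : ℝ≥0∞)
          = if σ j = ⟨(σ j).1, (σ j).2⟩ ∧ p (σ j).1 j = v then (1 : ℝ≥0∞) else 0 := by
            rw [if_pos ⟨rfl, h1⟩]
        _ ≤ _ := Finset.single_le_sum
            (f := fun i : Fin (m (σ j).1) =>
              if σ j = ⟨(σ j).1, i⟩ ∧ p (σ j).1 j = v then (1 : ℝ≥0∞) else 0)
            (fun _ _ => zero_le) (Finset.mem_univ (σ j).2)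
    · simp [h1, h2]
  · simp [h1]

/-- A schedule with makespan at most `T̄ = (1+ε)T` yields an integral
feasible solution of MILP(T̄). -/
theorem schedule_to_MILP (ε T : ℝ) (hε : 0 < ε) (hε1 : ε ≤ 1) (hT : 0 < T)
    (p : Fin K → J → ℝ≥0∞) (hp : ∀ t j, p t j ≠ 0) (m : Fin K → ℕ)
    (hsched : ∃ σ : J → Machine m, ∀ i, load p m σ i ≤ ENNReal.ofReal ((1 + ε) * T)) :
    ∃ z x, MILPFeasible ε T p m ((1 + ε) * T) z x ∧
      (∀ C t, ∃ n : ℕ, z C t = n) ∧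
      (∀ j t, x j t = 0 ∨ x j t = 1) := by
  obtain ⟨σ, hσ⟩ := hsched
  have hjob : ∀ j, p (σ j).1 j ≤ ENNReal.ofReal ((1 + ε) * T) := by
    intro j
    refine le_trans ?_ (hσ (σ j))
    exact Finset.single_le_sum (f := fun j' => p (σ j).1 j') (fun _ _ => zero_le)
      (Finset.mem_filter.mpr ⟨Finset.mem_univ j, rfl⟩)
  refine ⟨zdef ε T p m σ, fun j t => if (σ j).1 = t then 1 else 0,
    ⟨?_, ?_, ?_, ?_, ?_, ?_⟩, ?_, ?_⟩
  · -- support of z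
    intro C t hC
    by_contra hz
    obtain ⟨i, _, hi⟩ := Finset.exists_ne_zero_of_sum_ne_zero hz
    have hCi : C = conf ε T p m σ t i := by
      by_contra h; exact hi (if_neg h)
    refine hC ?_
    subst hCi
    constructor
    · intro v hv; exact if_neg hv
    · have : confSize (bigSet ε T p t) (conf ε T p m σ t i)
          = ∑ v ∈ bigSet ε T p t, ((fib p m σ t i v).card : ℝ≥0∞) * v := by
        refine Finset.sum_congr rfl fun v hv => ?_
        rw [conf, if_pos hv]
      rw [this]
      exact le_trans (sum_fib_le_load p m σ t i _) (hσ ⟨t, i⟩)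
  · -- big jobs not assignable
    intro j t h
    by_cases h2 : (σ j).1 = t
    · exact absurd (h2 ▸ hjob j) (not_le.mpr h)
    · exact if_neg h2
  · -- constraint (1)
    intro t
    have := tsum_z ε T p m σ t (fun _ => 1)
    simp only [one_mul] at this
    rw [this]
    simp
  · -- constraint (2)
    intro j
    rw [Finset.sum_ite_eq Finset.univ (σ j).1 (fun _ => (1 : ℝ≥0∞))]
    simp
  · -- constraint (3)
    intro t v hv
    rw [tsum_z ε T p m σ t (fun C => (C v : ℝ≥0∞))]
    have : ∀ i : Fin (m t), ((conf ε T p m σ t i v : ℕ) : ℝ≥0∞)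
        = ((fib p m σ t i v).card : ℝ≥0∞) := fun i => by
      rw [conf, if_pos hv]
    simp only [this]
    exact x_sum_le_fib p m σ t v
  · -- constraint (4)
    intro t
    rw [tsum_z ε T p m σ t (confSize (bigSet ε T p t))]
    have hconf : ∀ i : Fin (m t), confSize (bigSet ε T p t) (conf ε T p m σ t i)
        = ∑ v ∈ bigSet ε T p t, ((fib p m σ t i v).card : ℝ≥0∞) * v := by
      intro i
      refine Finset.sum_congr rfl fun v hv => ?_
      rw [conf, if_pos hv]
    have hsmall : ∑ v ∈ smallSet ε T p t,
        v * ∑ j ∈ Finset.univ.filter (fun j => p t j = v),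
          (if (σ j).1 = t then (1 : ℝ≥0∞) else 0)
        ≤ ∑ i : Fin (m t), ∑ v ∈ smallSet ε T p t,
            ((fib p m σ t i v).card : ℝ≥0∞) * v := by
      rw [Finset.sum_comm]
      refine Finset.sum_le_sum fun v _ => ?_
      rw [← Finset.sum_mul]
      calc v * ∑ j ∈ Finset.univ.filter (fun j => p t j = v),
              (if (σ j).1 = t then (1 : ℝ≥0∞) else 0)
          ≤ v * ∑ i : Fin (m t), ((fib p m σ t i v).card : ℝ≥0∞) :=
            mul_le_mul_right (x_sum_le_fib p m σ t v) v
        _ = (∑ i : Fin (m t), ((fib p m σ t i v).card : ℝ≥0∞)) * v := mul_comm _ _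
    have hdisj : Disjoint (bigSet ε T p t) (smallSet ε T p t) := by
      rw [Finset.disjoint_left]
      intro v hv hv'
      rw [bigSet, Finset.mem_filter] at hv
      rw [smallSet, Finset.mem_filter] at hv'
      exact absurd hv'.2 (not_le.mpr hv.2.1)
    calc (∑ i : Fin (m t), confSize (bigSet ε T p t) (conf ε T p m σ t i)) +
          ∑ v ∈ smallSet ε T p t,
            v * ∑ j ∈ Finset.univ.filter (fun j => p t j = v),
              (if (σ j).1 = t then (1 : ℝ≥0∞) else 0)
        ≤ (∑ i : Fin (m t), ∑ v ∈ bigSet ε T p t, ((fib p m σ t i v).card : ℝ≥0∞) * v)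
          + ∑ i : Fin (m t), ∑ v ∈ smallSet ε T p t,
              ((fib p m σ t i v).card : ℝ≥0∞) * v := by
          refine add_le_add (le_of_eq ?_) hsmall
          exact Finset.sum_congr rfl fun i _ => hconf i
      _ = ∑ i : Fin (m t), ∑ v ∈ bigSet ε T p t ∪ smallSet ε T p t,
            ((fib p m σ t i v).card : ℝ≥0∞) * v := by
          rw [← Finset.sum_add_distrib]
          exact Finset.sum_congr rfl fun i _ => (Finset.sum_union hdisj).symm
      _ ≤ ∑ i : Fin (m t), load p m σ ⟨t, i⟩ :=
          Finset.sum_le_sum fun i _ => sum_fib_le_load p m σ t i _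
      _ ≤ ∑ _i : Fin (m t), ENNReal.ofReal ((1 + ε) * T) :=
          Finset.sum_le_sum fun i _ => hσ ⟨t, i⟩
      _ = (m t : ℝ≥0∞) * ENNReal.ofReal ((1 + ε) * T) := by
          rw [Finset.sum_const, Finset.card_univ, Fintype.card_fin, nsmul_eq_mul]
  · -- z integral
    intro C t
    refine ⟨(Finset.univ.filter (fun i : Fin (m t) => C = conf ε T p m σ t i)).card, ?_⟩
    rw [zdef, Finset.sum_boole]
  · -- x integral
    intro j t
    by_cases h : (σ j).1 = t
    · right; exact if_pos h
    · left; exact if_neg h
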